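/- Under exact EGPO updates with learning rate η satisfying 0 < η ≤ 1/(β+3), for every T ≥ 1 one has DualGap_β(π^{(T)}) ≤ (2/β + 4/η) · KL(π*_β ‖ π^{(0)}) · (1 − ηβ)^T. -/

import Mathlib

open Real

/-- Tabular softmax policy. -/
noncomputable def softmax {Y : Type*} [Fintype Y] (θ : Y → ℝ) : Y → ℝ :=
  fun y => Real.exp (θ y) / ∑ y', Real.exp (θ y')

/-- Kullback–Leibler divergence between distributions on a finite set. -/
noncomputable def KLdiv {Y : Type*} [Fintype Y] (p q : Y → ℝ) : ℝ :=
  ∑ y, p y * Real.log (p y / q y)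

/-- `(P π)(y) = ∑ y' P(y, y') π(y')`. -/
noncomputable def matVec {Y : Type*} [Fintype Y] (P : Y → Y → ℝ) (p : Y → ℝ) : Y → ℝ :=
  fun y => ∑ y', P y y' * p y'

/-- The probability simplex over a finite set. -/
def simplex (Y : Type*) [Fintype Y] : Set (Y → ℝ) :=
  {p | (∀ y, 0 ≤ p y) ∧ ∑ y, p y = 1}

/-- Value of the preference game: `V(π, π') = ∑ y y', π(y) P(y,y') π'(y')`. -/
noncomputable def Vval {Y : Type*} [Fintype Y] (P : Y → Y → ℝ) (p q : Y → ℝ) : ℝ :=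
  ∑ y, ∑ y', p y * P y y' * q y'

/-- Regularized value `V_β(π, π') = V(π, π') − β KL(π‖π_ref) + β KL(π'‖π_ref)`. -/
noncomputable def Vreg {Y : Type*} [Fintype Y] (P : Y → Y → ℝ) (β : ℝ) (πref : Y → ℝ)
    (p q : Y → ℝ) : ℝ :=
  Vval P p q - β * KLdiv p πref + β * KLdiv q πref

/-- Regularized duality gap. -/
noncomputable def DualGapReg {Y : Type*} [Fintype Y] (P : Y → Y → ℝ) (β : ℝ) (πref : Y → ℝ)
    (p : Y → ℝ) : ℝ :=
  (⨆ q : simplex Y, Vreg P β πref q.1 p) - (⨅ q : simplex Y, Vreg P β πref p q.1)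

/-- Unregularized duality gap. -/
noncomputable def DualGap {Y : Type*} [Fintype Y] (P : Y → Y → ℝ) (p : Y → ℝ) : ℝ :=
  (⨆ q : simplex Y, Vval P q.1 p) - (⨅ q : simplex Y, Vval P p q.1)

/-! ### Auxiliary definitions -/

/-- log-sum-exp. -/
noncomputable def egLse {Y : Type*} [Fintype Y] (θ : Y → ℝ) : ℝ :=
  Real.log (∑ y, Real.exp (θ y))

/-- dot product. -/
noncomputable def egDot {Y : Type*} [Fintype Y] (p u : Y → ℝ) : ℝ :=
  ∑ y, p y * u y

section Aux

variable {Y : Type*} [Fintype Y] [Nonempty Y]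

lemma egSumExpPos (θ : Y → ℝ) : 0 < ∑ y, Real.exp (θ y) :=
  Finset.sum_pos (fun y _ => Real.exp_pos _) Finset.univ_nonempty

lemma softmax_pos (θ : Y → ℝ) (y : Y) : 0 < softmax θ y :=
  div_pos (Real.exp_pos _) (egSumExpPos θ)

lemma softmax_sum (θ : Y → ℝ) : ∑ y, softmax θ y = 1 := by
  simp only [softmax]
  rw [← Finset.sum_div, div_self (ne_of_gt (egSumExpPos θ))]

lemma softmax_mem_simplex (θ : Y → ℝ) : softmax θ ∈ simplex Y :=
  ⟨fun y => (softmax_pos θ y).le, softmax_sum θ⟩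

lemma log_softmax (θ : Y → ℝ) (y : Y) :
    Real.log (softmax θ y) = θ y - egLse θ := by
  rw [softmax, Real.log_div (Real.exp_ne_zero _) (ne_of_gt (egSumExpPos θ)),
    Real.log_exp, egLse]

lemma kl_term {p q : ℝ} (hp : 0 ≤ p) (hq : 0 < q) :
    p * Real.log (p / q) = p * Real.log p - p * Real.log q := by
  rcases eq_or_lt_of_le hp with h | h
  · simp [← h]
  · rw [Real.log_div (ne_of_gt h) (ne_of_gt hq), mul_sub]

/-- KL divergence of a (sub)distribution against a softmax. -/
lemma kl_to_softmax (p : Y → ℝ) (hp : ∀ y, 0 ≤ p y) (c : Y → ℝ) :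
    KLdiv p (softmax c)
      = (∑ y, p y * Real.log (p y)) - egDot p c + (∑ y, p y) * egLse c := by
  unfold KLdiv
  have : ∀ y : Y, p y * Real.log (p y / softmax c y)
      = p y * Real.log (p y) - (p y * c y - p y * egLse c) := by
    intro y
    rw [kl_term (hp y) (softmax_pos c y), log_softmax, mul_sub]
  rw [Finset.sum_congr rfl (fun y _ => this y)]
  rw [Finset.sum_sub_distrib, Finset.sum_sub_distrib, ← Finset.sum_mul]
  unfold egDot; ring

lemma entropy_softmax (a : Y → ℝ) :
    ∑ y, softmax a y * Real.log (softmax a y) = egDot (softmax a) a - egLse a := by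
  have : ∀ y : Y, softmax a y * Real.log (softmax a y)
      = softmax a y * a y - softmax a y * egLse a := by
    intro y; rw [log_softmax, mul_sub]
  rw [Finset.sum_congr rfl (fun y _ => this y), Finset.sum_sub_distrib, ← Finset.sum_mul,
    softmax_sum, one_mul]
  rfl

/-- KL between two softmax policies. -/
lemma klss (a b : Y → ℝ) :
    KLdiv (softmax a) (softmax b)
      = egDot (softmax a) a - egDot (softmax a) b - egLse a + egLse b := by
  rw [kl_to_softmax (softmax a) (fun y => (softmax_pos a y).le) b, entropy_softmax,
    softmax_sum, one_mul]
  ring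

/-- Gibbs' inequality. -/
lemma kl_nonneg {p q : Y → ℝ} (hp : ∀ y, 0 ≤ p y) (hps : ∑ y, p y = 1)
    (hq : ∀ y, 0 < q y) (hqs : ∑ y, q y = 1) : 0 ≤ KLdiv p q := by
  have key : ∀ y : Y, p y - q y ≤ p y * Real.log (p y / q y) := by
    intro y
    rcases eq_or_lt_of_le (hp y) with h | h
    · simp [← h, (hq y).le]
    · have hlog : Real.log (q y / p y) ≤ q y / p y - 1 :=
        Real.log_le_sub_one_of_pos (div_pos (hq y) h)
      have : Real.log (p y / q y) = - Real.log (q y / p y) := by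
        rw [← Real.log_inv]; congr 1
        field_simp
      rw [this]
      have := mul_le_mul_of_nonneg_left hlog (hp y)
      have hne : p y ≠ 0 := ne_of_gt h
      calc p y - q y = -(p y * (q y / p y - 1)) := by field_simp; ring
        _ ≤ -(p y * Real.log (q y / p y)) := by linarith
        _ = p y * -Real.log (q y / p y) := by ring
  calc (0:ℝ) = ∑ y, (p y - q y) := by rw [Finset.sum_sub_distrib, hps, hqs]; ring
    _ ≤ _ := Finset.sum_le_sum (fun y _ => key y)

end Aux

/-! ### Pinsker's inequality -/

section Pinsker

/-- The helper function for the scalar inequality. -/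
noncomputable def egPsi (x : ℝ) : ℝ :=
  Real.log x - (5 * x ^ 2 - 4 * x - 1) / (2 * x ^ 2 + 4 * x)

lemma egPsi_hasDeriv {x : ℝ} (hx : 0 < x) :
    HasDerivAt egPsi (4 * (x - 1) ^ 3 / (2 * x ^ 2 + 4 * x) ^ 2) x := by
  have hden : 2 * x ^ 2 + 4 * x ≠ 0 := by nlinarith
  have h1 : HasDerivAt (fun x : ℝ => 5 * x ^ 2 - 4 * x - 1) (10 * x - 4) x := by
    have := (((hasDerivAt_pow 2 x).const_mul (5:ℝ)).sub ((hasDerivAt_id x).const_mul (4:ℝ))).sub_const (1:ℝ)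
    refine this.congr_deriv ?_
    simp; ring
  have h2 : HasDerivAt (fun x : ℝ => 2 * x ^ 2 + 4 * x) (4 * x + 4) x := by
    have := ((hasDerivAt_pow 2 x).const_mul (2:ℝ)).add ((hasDerivAt_id x).const_mul (4:ℝ))
    refine this.congr_deriv ?_
    simp; ring
  have h3 := (Real.hasDerivAt_log (ne_of_gt hx)).sub (h1.div h2 hden)
  refine h3.congr_deriv ?_
  field_simp
  ring

lemma egPsi_nonneg {x : ℝ} (hx : 0 < x) : 0 ≤ egPsi x := by
  have hone : egPsi 1 = 0 := by
    unfold egPsi; norm_num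
  have hcont : ∀ z ∈ Set.Ioi (0:ℝ), ContinuousAt egPsi z := fun z hz =>
    (egPsi_hasDeriv hz).continuousAt
  rcases le_or_gt 1 x with h | h
  · -- monotone on [1, x]
    have hmono : MonotoneOn egPsi (Set.Icc 1 x) := by
      apply monotoneOn_of_deriv_nonneg (convex_Icc 1 x)
      · exact fun z hz => (hcont z (lt_of_lt_of_le one_pos hz.1)).continuousWithinAt
      · intro z hz
        rw [interior_Icc] at hz
        exact (egPsi_hasDeriv (lt_trans one_pos hz.1)).differentiableAt.differentiableWithinAt
      · intro z hz
        rw [interior_Icc] at hz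
        rw [(egPsi_hasDeriv (lt_trans one_pos hz.1)).deriv]
        have hz1 : (0:ℝ) ≤ z - 1 := by linarith [hz.1]
        have h3 : (0:ℝ) ≤ (z - 1) ^ 3 := pow_nonneg hz1 3
        have h4 : (0:ℝ) ≤ (2 * z ^ 2 + 4 * z) ^ 2 := sq_nonneg _
        apply div_nonneg (by nlinarith) h4
    have := hmono ⟨le_refl 1, h⟩ ⟨h, le_refl x⟩ h
    rwa [hone] at this
  · -- antitone on [x, 1]
    have hmono : AntitoneOn egPsi (Set.Icc x 1) := by
      apply antitoneOn_of_deriv_nonpos (convex_Icc x 1)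
      · exact fun z hz => (hcont z (lt_of_lt_of_le hx hz.1)).continuousWithinAt
      · intro z hz
        rw [interior_Icc] at hz
        exact (egPsi_hasDeriv (lt_trans hx hz.1)).differentiableAt.differentiableWithinAt
      · intro z hz
        rw [interior_Icc] at hz
        rw [(egPsi_hasDeriv (lt_trans hx hz.1)).deriv]
        have hz1 : z - 1 < 0 := by linarith [hz.2]
        have hcube : (z - 1) ^ 3 ≤ 0 := by
          have := mul_nonneg (sq_nonneg (z-1)) (neg_nonneg.mpr hz1.le)
          nlinarith [sq_nonneg (z-1)]
        have hd : (0:ℝ) < (2 * z ^ 2 + 4 * z) ^ 2 := by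
          have : 0 < z := lt_trans hx hz.1
          positivity
        apply div_nonpos_of_nonpos_of_nonneg
        · nlinarith
        · exact hd.le
    have := hmono ⟨le_refl x, h.le⟩ ⟨h.le, le_refl 1⟩ h.le
    rwa [hone] at this

/-- scalar inequality for Pinsker. -/
lemma pinsker_pointwise {p q : ℝ} (hp : 0 < p) (hq : 0 < q) :
    3 * (p - q) ^ 2 / (2 * (p + 2 * q)) ≤ p * Real.log (p / q) - p + q := by
  have hx : 0 < p / q := div_pos hp hq
  have hpsi := egPsi_nonneg hx
  unfold egPsi at hpsi
  have hlog : p * Real.log (p / q)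
      = q * ((p/q) * Real.log (p/q)) := by field_simp
  have hden : (0:ℝ) < 2 * (p/q) ^ 2 + 4 * (p/q) := by positivity
  have key : (5 * (p/q) ^ 2 - 4 * (p/q) - 1) / (2 * (p/q) ^ 2 + 4 * (p/q))
      ≤ Real.log (p / q) := by linarith
  have key2 : (p/q) * ((5 * (p/q) ^ 2 - 4 * (p/q) - 1) / (2 * (p/q) ^ 2 + 4 * (p/q)))
      ≤ (p/q) * Real.log (p / q) := by
    exact mul_le_mul_of_nonneg_left key hx.le
  have key3 : q * ((p/q) * ((5 * (p/q) ^ 2 - 4 * (p/q) - 1) / (2 * (p/q) ^ 2 + 4 * (p/q))))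
      ≤ p * Real.log (p / q) := by
    rw [hlog]
    exact mul_le_mul_of_nonneg_left key2 hq.le
  have heq : q * ((p/q) * ((5 * (p/q) ^ 2 - 4 * (p/q) - 1) / (2 * (p/q) ^ 2 + 4 * (p/q))))
      = 3 * (p - q) ^ 2 / (2 * (p + 2 * q)) + p - q := by
    have h1 : p + 2*q > 0 := by linarith
    field_simp
    ring
  linarith [key3, heq.symm.le]

/-- Pinsker's inequality on the finite simplex. -/
lemma pinsker {Y : Type*} [Fintype Y] [Nonempty Y] {p q : Y → ℝ}
    (hp : ∀ y, 0 < p y) (hps : ∑ y, p y = 1)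
    (hq : ∀ y, 0 < q y) (hqs : ∑ y, q y = 1) :
    (∑ y, |p y - q y|) ^ 2 ≤ 2 * KLdiv p q := by
  have h3 : ∑ y, (p y + 2 * q y) = 3 := by
    rw [Finset.sum_add_distrib, hps, ← Finset.mul_sum, hqs]; norm_num
  have hcs : (∑ y, |p y - q y|) ^ 2 / 3 ≤ ∑ y, (p y - q y) ^ 2 / (p y + 2 * q y) := by
    have := Finset.sq_sum_div_le_sum_sq_div Finset.univ (fun y => |p y - q y|)
      (g := fun y => p y + 2 * q y)
      (fun y _ => by show (0:ℝ) < p y + 2 * q y; linarith [hp y, hq y])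
    rw [h3] at this
    simpa [sq_abs] using this
  have hpt : ∑ y, (p y - q y) ^ 2 / (p y + 2 * q y) ≤ (2/3) * KLdiv p q := by
    have key : ∀ y : Y, (p y - q y) ^ 2 / (p y + 2 * q y)
        ≤ (2/3) * (p y * Real.log (p y / q y) - p y + q y) := by
      intro y
      have hd : (0:ℝ) < p y + 2 * q y := by linarith [hp y, hq y]
      have h2d : (0:ℝ) < 2 * (p y + 2 * q y) := by linarith
      have h := (div_le_iff₀ h2d).mp (pinsker_pointwise (hp y) (hq y))
      rw [div_le_iff₀ hd]
      nlinarith [h]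
    calc ∑ y, (p y - q y) ^ 2 / (p y + 2 * q y)
        ≤ ∑ y, (2/3) * (p y * Real.log (p y / q y) - p y + q y) :=
          Finset.sum_le_sum (fun y _ => key y)
      _ = (2/3) * KLdiv p q := by
          rw [← Finset.mul_sum]
          congr 1
          unfold KLdiv
          rw [show (∑ y, (p y * Real.log (p y / q y) - p y + q y))
            = (∑ y, p y * Real.log (p y / q y)) - (∑ y, p y) + (∑ y, q y) by
              rw [Finset.sum_add_distrib, Finset.sum_sub_distrib]]
          rw [hps, hqs]; ring
  nlinarith [hcs, hpt]

end Pinsker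

/-! ### Matrix and dot product lemmas -/

section Mat

variable {Y : Type*} [Fintype Y]

lemma egDot_comb (p u v w : Y → ℝ) (a b c : ℝ) :
    egDot p (fun y => a * u y + b * v y + c * w y)
      = a * egDot p u + b * egDot p v + c * egDot p w := by
  unfold egDot
  rw [Finset.mul_sum, Finset.mul_sum, Finset.mul_sum, ← Finset.sum_add_distrib,
    ← Finset.sum_add_distrib]
  exact Finset.sum_congr rfl fun y _ => by ring

lemma egDot_comb2 (p u w : Y → ℝ) (c : ℝ) :
    egDot p (fun y => u y + c * w y) = egDot p u + c * egDot p w := by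
  unfold egDot
  rw [Finset.mul_sum, ← Finset.sum_add_distrib]
  exact Finset.sum_congr rfl fun y _ => by ring

lemma Vval_eq_dot (P : Y → Y → ℝ) (p q : Y → ℝ) :
    Vval P p q = egDot p (matVec P q) := by
  unfold Vval egDot matVec
  exact Finset.sum_congr rfl fun y _ => by rw [Finset.mul_sum]; exact Finset.sum_congr rfl fun y' _ => by ring

lemma matVec_sub (P : Y → Y → ℝ) (r w : Y → ℝ) :
    matVec P (fun y => r y - w y) = fun y => matVec P r y - matVec P w y := by
  funext y
  unfold matVec
  rw [← Finset.sum_sub_distrib]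
  exact Finset.sum_congr rfl fun y' _ => by ring

lemma Mswap (P : Y → Y → ℝ) (hPsum : ∀ y y', P y y' + P y' y = 1)
    (p q : Y → ℝ) (hps : ∑ y, p y = 1) (hqs : ∑ y, q y = 1) :
    egDot p (matVec P q) + egDot q (matVec P p) = 1 := by
  unfold egDot matVec
  have h2 : ∑ y, q y * ∑ y', P y y' * p y' = ∑ y, ∑ y', q y' * (P y' y * p y) := by
    rw [Finset.sum_comm]
    exact Finset.sum_congr rfl fun y _ => by rw [Finset.mul_sum]
  have h1 : ∑ y, p y * ∑ y', P y y' * q y' = ∑ y, ∑ y', p y * (P y y' * q y') := by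
    exact Finset.sum_congr rfl fun y _ => by rw [Finset.mul_sum]
  rw [h1, h2, ← Finset.sum_add_distrib]
  have h3 : ∀ y : Y, ∑ y', (p y * (P y y' * q y') + q y' * (P y' y * p y))
      = ∑ y', p y * q y' :=
    fun y => Finset.sum_congr rfl fun y' _ => by linear_combination (p y * q y') * hPsum y y'
  have h4 : ∀ y : Y, (∑ y', p y * (P y y' * q y')) + (∑ y', q y' * (P y' y * p y))
      = ∑ y', p y * q y' := fun y => by rw [← Finset.sum_add_distrib]; exact h3 y
  rw [Finset.sum_congr rfl fun y _ => h4 y]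
  calc ∑ y, ∑ y', p y * q y' = ∑ y, p y * ∑ y', q y' :=
        Finset.sum_congr rfl fun y _ => (Finset.mul_sum _ _ _).symm
    _ = 1 := by rw [hqs]; simp [hps]

lemma Mself (P : Y → Y → ℝ) (hPsum : ∀ y y', P y y' + P y' y = 1)
    (p : Y → ℝ) (hps : ∑ y, p y = 1) :
    egDot p (matVec P p) = 1/2 := by
  have := Mswap P hPsum p p hps hps
  linarith

lemma cross_bound (P : Y → Y → ℝ) (hP0 : ∀ y y', 0 ≤ P y y') (hP1 : ∀ y y', P y y' ≤ 1)
    (u v : Y → ℝ) (hu : ∑ y, u y = 0) (hv : ∑ y, v y = 0) :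
    egDot u (matVec P v) ≤ 1/2 * (∑ y, |u y|) * (∑ y, |v y|) := by
  have key : egDot u (matVec P v) = ∑ y, ∑ y', u y * ((P y y' - 1/2) * v y') := by
    unfold egDot matVec
    have : ∀ y : Y, u y * ∑ y', P y y' * v y'
        = ∑ y', u y * ((P y y' - 1/2) * v y') := by
      intro y
      rw [Finset.mul_sum]
      have expand : ∀ y' : Y, u y * ((P y y' - 1/2) * v y')
          = u y * (P y y' * v y') - u y * (1/2) * v y' := fun y' => by ring
      have hfac : ∑ y', u y * (1/2) * v y' = u y * (1/2) * ∑ y', v y' :=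
        (Finset.mul_sum _ _ _).symm
      rw [Finset.sum_congr rfl fun y' _ => expand y', Finset.sum_sub_distrib, hfac, hv]
      simp
    exact Finset.sum_congr rfl fun y _ => this y
  rw [key]
  calc ∑ y, ∑ y', u y * ((P y y' - 1/2) * v y')
      ≤ ∑ y, |∑ y', u y * ((P y y' - 1/2) * v y')| :=
        Finset.sum_le_sum fun y _ => le_abs_self _
    _ ≤ ∑ y, ∑ y', |u y| * (1/2 * |v y'|) := by
        apply Finset.sum_le_sum
        intro y _
        calc |∑ y', u y * ((P y y' - 1/2) * v y')|
            ≤ ∑ y', |u y * ((P y y' - 1/2) * v y')| := Finset.abs_sum_le_sum_abs _ _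
          _ ≤ ∑ y', |u y| * (1/2 * |v y'|) := by
              apply Finset.sum_le_sum
              intro y' _
              rw [abs_mul, abs_mul]
              have hP : |P y y' - 1/2| ≤ 1/2 := by
                rw [abs_le]; constructor <;> [linarith [hP0 y y']; linarith [hP1 y y']]
              have := mul_le_mul_of_nonneg_right hP (abs_nonneg (v y'))
              have h2 := mul_le_mul_of_nonneg_left this (abs_nonneg (u y))
              linarith
    _ = 1/2 * (∑ y, |u y|) * (∑ y, |v y|) := by
        have hfac : ∀ y : Y, ∑ y', |u y| * (1/2 * |v y'|) = |u y| * (1/2 * ∑ y', |v y'|) := by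
          intro y
          rw [Finset.mul_sum, Finset.mul_sum]
        rw [Finset.sum_congr rfl fun y _ => hfac y, ← Finset.sum_mul]
        ring

lemma expand_cross (P : Y → Y → ℝ) (p q r w : Y → ℝ) :
    ∑ y, (p y - q y) * (matVec P r y - matVec P w y)
      = egDot p (matVec P r) - egDot p (matVec P w)
        - egDot q (matVec P r) + egDot q (matVec P w) := by
  unfold egDot
  rw [← Finset.sum_sub_distrib, ← Finset.sum_sub_distrib, ← Finset.sum_add_distrib]
  exact Finset.sum_congr rfl fun y _ => by ring

end Mat

/-! ### Extra cross lemma -/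

lemma expand_cross' {Y : Type*} [Fintype Y] (P : Y → Y → ℝ) (p q r w : Y → ℝ) :
    egDot (fun y => p y - q y) (matVec P (fun y => r y - w y))
      = egDot p (matVec P r) - egDot p (matVec P w)
        - egDot q (matVec P r) + egDot q (matVec P w) := by
  rw [matVec_sub]
  exact expand_cross P p q r w

/-! ### One step of exact EGPO -/

section Step

variable {Y : Type*} [Fintype Y] [Nonempty Y]

set_option maxHeartbeats 2000000 in
lemma EGstep (P : Y → Y → ℝ) (hP0 : ∀ y y', 0 ≤ P y y') (hP1 : ∀ y y', P y y' ≤ 1)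
    (hPsum : ∀ y y', P y y' + P y' y = 1)
    (β : ℝ) (hβ : 0 < β) (η : ℝ) (hη : 0 < η) (hcond : η * (β + 3) ≤ 1)
    (θref st a h o : Y → ℝ)
    (hst : st = fun y => θref y + β⁻¹ * matVec P (softmax st) y)
    (hh : h = fun y => (1 - η*β) * a y + η*β * θref y + η * matVec P (softmax a) y)
    (ho : o = fun y => (1 - η*β) * a y + η*β * θref y + η * matVec P (softmax h) y) :
    KLdiv (softmax st) (softmax o) + η*β * KLdiv (softmax h) (softmax st)
      + (1 - η/4) * KLdiv (softmax o) (softmax h)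
      + (2*(1-η*β)/3) * KLdiv (softmax h) (softmax a)
      ≤ (1-η*β) * KLdiv (softmax st) (softmax a)
    ∧ η*β * KLdiv (softmax o) (softmax st)
      ≤ η*β * KLdiv (softmax h) (softmax st) + (1 + η/6) * KLdiv (softmax o) (softmax h)
        + (1-η*β) * KLdiv (softmax h) (softmax a)
        + ((1-η*β)/2) * KLdiv (softmax st) (softmax a) := by
  have hρ3 : 3*η ≤ 1 - η*β := by nlinarith
  have hρ : (0:ℝ) < 1 - η*β := by nlinarith
  -- dot product expansions
  have dH : ∀ p : Y → ℝ, egDot p h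
      = (1-η*β) * egDot p a + η*β * egDot p θref + η * egDot p (matVec P (softmax a)) := by
    intro p; rw [hh]; exact egDot_comb p a θref (matVec P (softmax a)) _ _ _
  have dO : ∀ p : Y → ℝ, egDot p o
      = (1-η*β) * egDot p a + η*β * egDot p θref + η * egDot p (matVec P (softmax h)) := by
    intro p; rw [ho]; exact egDot_comb p a θref (matVec P (softmax h)) _ _ _
  have eqS : ∀ p : Y → ℝ, β * egDot p st
      = β * egDot p θref + egDot p (matVec P (softmax st)) := by
    intro p
    have h1 : egDot p st = egDot p θref + β⁻¹ * egDot p (matVec P (softmax st)) := by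
      conv_lhs => rw [hst]
      exact egDot_comb2 p θref (matVec P (softmax st)) β⁻¹
    rw [h1]; field_simp
  -- matrix relations
  have rss : egDot (softmax st) (matVec P (softmax st)) = 1/2 :=
    Mself P hPsum _ (softmax_sum st)
  have rhh : egDot (softmax h) (matVec P (softmax h)) = 1/2 :=
    Mself P hPsum _ (softmax_sum h)
  have rsh : egDot (softmax st) (matVec P (softmax h))
      + egDot (softmax h) (matVec P (softmax st)) = 1 :=
    Mswap P hPsum _ _ (softmax_sum st) (softmax_sum h)
  -- exact one-step identities
  have E1 : KLdiv (softmax st) (softmax o) + KLdiv (softmax o) (softmax h)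
      = (1-η*β) * KLdiv (softmax st) (softmax a)
        - η*β * KLdiv (softmax h) (softmax st)
        - (1-η*β) * KLdiv (softmax h) (softmax a)
        + η * (egDot (softmax h) (matVec P (softmax a))
               - egDot (softmax h) (matVec P (softmax h))
               - egDot (softmax o) (matVec P (softmax a))
               + egDot (softmax o) (matVec P (softmax h))) := by
    rw [klss st o, klss o h, klss st a, klss h st, klss h a,
      dO (softmax st), dO (softmax o), dH (softmax o), dH (softmax h)]
    linear_combination η * eqS (softmax st) - η * eqS (softmax h) + η * rhh + η * rss - η * rsh
  have E2 : η*β * KLdiv (softmax o) (softmax st)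
      = η*β * KLdiv (softmax h) (softmax st) + KLdiv (softmax o) (softmax h)
        + (1-η*β) * KLdiv (softmax h) (softmax a)
        - (1-η*β) * KLdiv (softmax o) (softmax a)
        + η * (egDot (softmax o) (matVec P (softmax a))
               - egDot (softmax o) (matVec P (softmax st))
               - egDot (softmax h) (matVec P (softmax a))
               + egDot (softmax h) (matVec P (softmax st))) := by
    rw [klss o st, klss h st, klss o h, klss h a, klss o a,
      dO (softmax o), dH (softmax h), dH (softmax o)]
    linear_combination (-η) * eqS (softmax o) + η * eqS (softmax h)
  -- total variation quantities
  obtain ⟨x, hxdef⟩ : ∃ v : ℝ, v = ∑ yy, |softmax h yy - softmax o yy| := ⟨_, rfl⟩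
  obtain ⟨y', hydef⟩ : ∃ v : ℝ, v = ∑ yy, |softmax a yy - softmax h yy| := ⟨_, rfl⟩
  obtain ⟨z, hzdef⟩ : ∃ v : ℝ, v = ∑ yy, |softmax a yy - softmax st yy| := ⟨_, rfl⟩
  have hx0 : 0 ≤ x := hxdef ▸ Finset.sum_nonneg fun y _ => abs_nonneg _
  have hy0 : 0 ≤ y' := hydef ▸ Finset.sum_nonneg fun y _ => abs_nonneg _
  have hz0 : 0 ≤ z := hzdef ▸ Finset.sum_nonneg fun y _ => abs_nonneg _
  have hzero : ∀ u v : Y → ℝ, (∑ yy, softmax u yy) = 1 → (∑ yy, softmax v yy) = 1 →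
      ∑ yy, (softmax u yy - softmax v yy) = 0 := by
    intro u v h1 h2; rw [Finset.sum_sub_distrib, h1, h2]; ring
  -- Pinsker bounds
  have hx2 : x^2 ≤ 2 * KLdiv (softmax o) (softmax h) := by
    have hflip : x = ∑ yy, |softmax o yy - softmax h yy| := by
      rw [hxdef]; exact Finset.sum_congr rfl fun y _ => abs_sub_comm _ _
    rw [hflip]
    exact pinsker (softmax_pos o) (softmax_sum o) (softmax_pos h) (softmax_sum h)
  have hy2 : y'^2 ≤ 2 * KLdiv (softmax h) (softmax a) := by
    have hflip : y' = ∑ yy, |softmax h yy - softmax a yy| := by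
      rw [hydef]; exact Finset.sum_congr rfl fun y _ => abs_sub_comm _ _
    rw [hflip]
    exact pinsker (softmax_pos h) (softmax_sum h) (softmax_pos a) (softmax_sum a)
  have hz2 : z^2 ≤ 2 * KLdiv (softmax st) (softmax a) := by
    have hflip : z = ∑ yy, |softmax st yy - softmax a yy| := by
      rw [hzdef]; exact Finset.sum_congr rfl fun y _ => abs_sub_comm _ _
    rw [hflip]
    exact pinsker (softmax_pos st) (softmax_sum st) (softmax_pos a) (softmax_sum a)
  -- cross term bounds
  have hC1 : egDot (softmax h) (matVec P (softmax a))
      - egDot (softmax h) (matVec P (softmax h))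
      - egDot (softmax o) (matVec P (softmax a))
      + egDot (softmax o) (matVec P (softmax h)) ≤ 1/2 * x * y' := by
    have hc := cross_bound P hP0 hP1 (fun y => softmax h y - softmax o y)
      (fun y => softmax a y - softmax h y)
      (hzero h o (softmax_sum h) (softmax_sum o))
      (hzero a h (softmax_sum a) (softmax_sum h))
    rw [expand_cross'] at hc
    rw [hxdef, hydef]
    linarith
  have hC2 : egDot (softmax o) (matVec P (softmax a))
      - egDot (softmax o) (matVec P (softmax st))
      - egDot (softmax h) (matVec P (softmax a))
      + egDot (softmax h) (matVec P (softmax st)) ≤ 1/2 * x * z := by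
    have hc := cross_bound P hP0 hP1 (fun y => softmax o y - softmax h y)
      (fun y => softmax a y - softmax st y)
      (hzero o h (softmax_sum o) (softmax_sum h))
      (hzero a st (softmax_sum a) (softmax_sum st))
    rw [expand_cross'] at hc
    have hflip : ∑ yy, |softmax o yy - softmax h yy| = x := by
      rw [hxdef]; exact Finset.sum_congr rfl fun y _ => abs_sub_comm _ _
    rw [hflip] at hc
    rw [hzdef]
    linarith
  have hE0 : 0 ≤ KLdiv (softmax o) (softmax a) :=
    kl_nonneg (fun y => (softmax_pos o y).le) (softmax_sum o) (softmax_pos a) (softmax_sum a)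
  constructor
  · -- I1
    have c1 : η * (egDot (softmax h) (matVec P (softmax a))
        - egDot (softmax h) (matVec P (softmax h))
        - egDot (softmax o) (matVec P (softmax a))
        + egDot (softmax o) (matVec P (softmax h))) ≤ η * (1/2 * x * y') :=
      mul_le_mul_of_nonneg_left hC1 hη.le
    have c2 : η * (1/2 * x * y') ≤ η/8 * x^2 + η/2 * y'^2 := by
      nlinarith [mul_nonneg hη.le (sq_nonneg (x - 2*y'))]
    have c3 : η/8 * x^2 ≤ η/4 * KLdiv (softmax o) (softmax h) := by
      nlinarith [mul_le_mul_of_nonneg_left hx2 (by positivity : (0:ℝ) ≤ η/8)]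
    have c4 : η/2 * y'^2 ≤ (1-η*β)/3 * KLdiv (softmax h) (softmax a) := by
      have hB0 : 0 ≤ KLdiv (softmax h) (softmax a) :=
        kl_nonneg (fun y => (softmax_pos h y).le) (softmax_sum h) (softmax_pos a) (softmax_sum a)
      nlinarith [mul_le_mul_of_nonneg_left hy2 (by positivity : (0:ℝ) ≤ η/2), hρ3]
    linarith [E1, c1, c2, c3, c4]
  · -- I2
    have c1 : η * (egDot (softmax o) (matVec P (softmax a))
        - egDot (softmax o) (matVec P (softmax st))
        - egDot (softmax h) (matVec P (softmax a))
        + egDot (softmax h) (matVec P (softmax st))) ≤ η * (1/2 * x * z) :=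
      mul_le_mul_of_nonneg_left hC2 hη.le
    have c2 : η * (1/2 * x * z) ≤ η/12 * x^2 + 3*η/4 * z^2 := by
      nlinarith [mul_nonneg hη.le (sq_nonneg (x - 3*z))]
    have c3 : η/12 * x^2 ≤ η/6 * KLdiv (softmax o) (softmax h) := by
      nlinarith [mul_le_mul_of_nonneg_left hx2 (by positivity : (0:ℝ) ≤ η/12)]
    have c4 : 3*η/4 * z^2 ≤ (1-η*β)/2 * KLdiv (softmax st) (softmax a) := by
      have hD0 : 0 ≤ KLdiv (softmax st) (softmax a) :=
        kl_nonneg (fun y => (softmax_pos st y).le) (softmax_sum st) (softmax_pos a) (softmax_sum a)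
      have hD0' : 0 ≤ KLdiv (softmax st) (softmax a) := hD0
      nlinarith [mul_le_mul_of_nonneg_left hz2 (by positivity : (0:ℝ) ≤ 3*η/4), hρ3]
    have hE : 0 ≤ (1-η*β) * KLdiv (softmax o) (softmax a) := mul_nonneg hρ.le hE0
    linarith [E2, c1, c2, c3, c4]

end Step

/-! ### Final certificate -/

lemma EGcert (η β K Ks S A B D : ℝ) (hη : 0 < η) (hβ : 0 < β) (hcond : η*(β+3) ≤ 1)
    (hK : 0 ≤ K) (hKs : 0 ≤ Ks) (hS : 0 ≤ S) (hA : 0 ≤ A) (hB : 0 ≤ B) (hD : 0 ≤ D)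
    (I1 : K + η*β*S + (1-η/4)*A + (2*(1-η*β)/3)*B ≤ (1-η*β)*D)
    (I2 : η*β*Ks ≤ η*β*S + (1+η/6)*A + (1-η*β)*B + ((1-η*β)/2)*D) :
    2/β*K + 2*β*Ks ≤ (2/β + 4/η)*((1-η*β)*D) := by
  have hη3 : η ≤ 1/3 := by nlinarith
  have hρ : (0:ℝ) < 1 - η*β := by nlinarith
  have core : η*K + η*β^2*Ks ≤ (η + 2*β)*((1-η*β)*D) := by
    have t1 := mul_le_mul_of_nonneg_left I1 (by positivity : (0:ℝ) ≤ η + 3*β/2)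
    have t2 := mul_le_mul_of_nonneg_left I2 hβ.le
    have sA : (0:ℝ) ≤ (β/2 + η - 13/24*η*β - η^2/4) * A := by
      apply mul_nonneg _ hA
      nlinarith [mul_nonneg hη.le hβ.le, mul_pos hη hβ]
    have sS : (0:ℝ) ≤ ((η + β/2) * (η*β)) * S := by positivity
    have sB : (0:ℝ) ≤ (2*η/3 * (1-η*β)) * B := by positivity
    have sK : (0:ℝ) ≤ (3*β/2) * K := by positivity
    nlinarith [t1, t2, sA, sS, sB, sK]
  have hposc : (0:ℝ) < 2/(η*β) := by positivity
  have hfin := mul_le_mul_of_nonneg_left core hposc.le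
  have eL : 2/(η*β) * (η*K + η*β^2*Ks) = 2/β*K + 2*β*Ks := by
    field_simp
  have eR : 2/(η*β) * ((η + 2*β)*((1-η*β)*D)) = (2/β + 4/η)*((1-η*β)*D) := by
    field_simp; ring
  rw [eL, eR] at hfin
  exact hfin

/-! ### Main theorem -/

set_option maxHeartbeats 4000000 in
/-- under exact EGPO updates with `0 < η ≤ 1/(β+3)`, for every `T ≥ 1`,
`DualGap_β(π^{(T)}) ≤ (2/β + 4/η) · KL(π*_β ‖ π^{(0)}) · (1 − ηβ)^T`. -/
theorem egpo_exact_linear_convergence_dual_gap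
    {Y : Type*} [Fintype Y] (hY : 2 ≤ Fintype.card Y)
    (P : Y → Y → ℝ)
    (hP0 : ∀ y y', 0 ≤ P y y') (hP1 : ∀ y y', P y y' ≤ 1)
    (hPsum : ∀ y y', P y y' + P y' y = 1)
    (β : ℝ) (hβ : 0 < β)
    (θref : Y → ℝ)
    (θstar : Y → ℝ)
    (hstar : θstar = fun y => θref y + matVec P (softmax θstar) y / β)
    (η : ℝ) (hη : 0 < η) (hη' : η ≤ 1 / (β + 3))
    (θ θhalf : ℕ → Y → ℝ)
    (hhalf : ∀ t, θhalf t = fun y =>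
      (1 - η * β) * θ t y + η * β * (θref y + matVec P (softmax (θ t)) y / β))
    (hstep : ∀ t, θ (t + 1) = fun y =>
      (1 - η * β) * θ t y + η * β * (θref y + matVec P (softmax (θhalf t)) y / β))
    (T : ℕ) (hT : 1 ≤ T) :
    DualGapReg P β (softmax θref) (softmax (θ T))
      ≤ (2 / β + 4 / η) * KLdiv (softmax θstar) (softmax (θ 0)) * (1 - η * β) ^ T := by
  have hNE : Nonempty Y := Fintype.card_pos_iff.mp (by omega)
  have hβ3 : (0:ℝ) < β + 3 := by linarith
  have hcond : η * (β + 3) ≤ 1 := (le_div_iff₀ hβ3).mp hη'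
  have hρ : (0:ℝ) < 1 - η*β := by nlinarith
  have hρn : (0:ℝ) ≤ 1 - η*β := hρ.le
  have hst : θstar = fun y => θref y + β⁻¹ * matVec P (softmax θstar) y := by
    conv_lhs => rw [hstar]
    funext y
    rw [div_eq_inv_mul]
  have hhalf' : ∀ t, θhalf t = fun y =>
      (1-η*β) * θ t y + η*β * θref y + η * matVec P (softmax (θ t)) y := by
    intro t
    rw [hhalf t]
    funext y
    field_simp
    ring
  have hstep' : ∀ t, θ (t+1) = fun y =>
      (1-η*β) * θ t y + η*β * θref y + η * matVec P (softmax (θhalf t)) y := by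
    intro t
    rw [hstep t]
    funext y
    field_simp
    ring
  have key := fun t => EGstep P hP0 hP1 hPsum β hβ η hη hcond θref θstar (θ t) (θhalf t)
    (θ (t+1)) hst (hhalf' t) (hstep' t)
  have klnn : ∀ u v : Y → ℝ, 0 ≤ KLdiv (softmax u) (softmax v) := fun u v =>
    kl_nonneg (fun y => (softmax_pos u y).le) (softmax_sum u) (softmax_pos v) (softmax_sum v)
  have hη3 : η ≤ 1/3 := by nlinarith
  have contr : ∀ t, KLdiv (softmax θstar) (softmax (θ (t+1)))
      ≤ (1-η*β) * KLdiv (softmax θstar) (softmax (θ t)) := by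
    intro t
    have h1 := (key t).1
    have n1 := klnn (θhalf t) θstar
    have n2 := klnn (θ (t+1)) (θhalf t)
    have n3 := klnn (θhalf t) (θ t)
    have p1 : (0:ℝ) ≤ η*β * KLdiv (softmax (θhalf t)) (softmax θstar) :=
      mul_nonneg (mul_pos hη hβ).le n1
    have p2 : (0:ℝ) ≤ (1 - η/4) * KLdiv (softmax (θ (t+1))) (softmax (θhalf t)) :=
      mul_nonneg (by linarith) n2
    have p3 : (0:ℝ) ≤ (2*(1-η*β)/3) * KLdiv (softmax (θhalf t)) (softmax (θ t)) :=
      mul_nonneg (by linarith) n3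
    linarith
  have geom : ∀ t, KLdiv (softmax θstar) (softmax (θ t))
      ≤ (1-η*β)^t * KLdiv (softmax θstar) (softmax (θ 0)) := by
    intro t
    induction t with
    | zero => simp
    | succ n ih =>
      calc KLdiv (softmax θstar) (softmax (θ (n+1)))
          ≤ (1-η*β) * KLdiv (softmax θstar) (softmax (θ n)) := contr n
        _ ≤ (1-η*β) * ((1-η*β)^n * KLdiv (softmax θstar) (softmax (θ 0))) :=
            mul_le_mul_of_nonneg_left ih hρn
        _ = (1-η*β)^(n+1) * KLdiv (softmax θstar) (softmax (θ 0)) := by ring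
  obtain ⟨N, rfl⟩ : ∃ N, T = N + 1 := ⟨T - 1, by omega⟩
  -- best response parameter
  obtain ⟨b, hbdef⟩ : ∃ b : Y → ℝ,
      b = fun y => θref y + β⁻¹ * matVec P (softmax (θ (N+1))) y := ⟨_, rfl⟩
  have eqB : ∀ p : Y → ℝ, β * egDot p b
      = β * egDot p θref + egDot p (matVec P (softmax (θ (N+1)))) := by
    intro p
    rw [hbdef, egDot_comb2 p θref (matVec P (softmax (θ (N+1)))) β⁻¹]
    field_simp
  have eqS : ∀ p : Y → ℝ, β * egDot p θstar
      = β * egDot p θref + egDot p (matVec P (softmax θstar)) := by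
    intro p
    have h1 : egDot p θstar = egDot p θref + β⁻¹ * egDot p (matVec P (softmax θstar)) := by
      conv_lhs => rw [hst]
      exact egDot_comb2 p θref (matVec P (softmax θstar)) β⁻¹
    rw [h1]
    field_simp
  have rTT : egDot (softmax (θ (N+1))) (matVec P (softmax (θ (N+1)))) = 1/2 :=
    Mself P hPsum _ (softmax_sum _)
  have rss : egDot (softmax θstar) (matVec P (softmax θstar)) = 1/2 :=
    Mself P hPsum _ (softmax_sum _)
  have rsT : egDot (softmax θstar) (matVec P (softmax (θ (N+1))))
      + egDot (softmax (θ (N+1))) (matVec P (softmax θstar)) = 1 :=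
    Mswap P hPsum _ _ (softmax_sum _) (softmax_sum _)
  -- the pointwise value identity
  have hq2 : ∀ q : Y → ℝ, (∀ y, 0 ≤ q y) → (∑ y, q y) = 1 →
      Vreg P β (softmax θref) (softmax (θ (N+1))) q
        = 1/2 - β * KLdiv (softmax (θ (N+1))) (softmax b) + β * KLdiv q (softmax b) := by
    intro q hq0 hqs
    have rqT : egDot (softmax (θ (N+1))) (matVec P q) + egDot q (matVec P (softmax (θ (N+1)))) = 1 :=
      Mswap P hPsum _ _ (softmax_sum _) hqs
    unfold Vreg
    rw [Vval_eq_dot, klss (θ (N+1)) θref, klss (θ (N+1)) b,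
      kl_to_softmax q hq0 θref, kl_to_softmax q hq0 b, hqs]
    linear_combination eqB q - eqB (softmax (θ (N+1))) + rqT - rTT
  -- decomposition of the best-response KL
  have hΦdec : β * KLdiv (softmax (θ (N+1))) (softmax b)
      = β * KLdiv (softmax θstar) (softmax b)
        + β * KLdiv (softmax (θ (N+1))) (softmax θstar) := by
    rw [klss (θ (N+1)) b, klss θstar b, klss (θ (N+1)) θstar]
    linear_combination eqB (softmax θstar) - eqB (softmax (θ (N+1)))
      + eqS (softmax (θ (N+1))) - eqS (softmax θstar) + rsT - rTT - rss
  -- symmetrized KL identity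
  have hsym : β * KLdiv (softmax θstar) (softmax b) + β * KLdiv (softmax b) (softmax θstar)
      = egDot (fun y => softmax θstar y - softmax b y)
          (matVec P (fun y => softmax θstar y - softmax (θ (N+1)) y)) := by
    rw [klss θstar b, klss b θstar, expand_cross']
    linear_combination eqS (softmax θstar) - eqB (softmax θstar)
      - eqS (softmax b) + eqB (softmax b)
  have hzero : ∀ u v : Y → ℝ, ∑ yy, (softmax u yy - softmax v yy) = 0 := fun u v => by
    rw [Finset.sum_sub_distrib, softmax_sum, softmax_sum]; ring
  have hcb := cross_bound P hP0 hP1 (fun y => softmax θstar y - softmax b y)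
    (fun y => softmax θstar y - softmax (θ (N+1)) y) (hzero θstar b) (hzero θstar (θ (N+1)))
  obtain ⟨u, hu⟩ : ∃ w : ℝ, w = ∑ yy, |softmax θstar yy - softmax b yy| := ⟨_, rfl⟩
  obtain ⟨v, hv⟩ : ∃ w : ℝ, w = ∑ yy, |softmax θstar yy - softmax (θ (N+1)) yy| := ⟨_, rfl⟩
  have hu2 : u^2 ≤ 2 * KLdiv (softmax θstar) (softmax b) := by
    rw [hu]
    exact pinsker (softmax_pos _) (softmax_sum _) (softmax_pos _) (softmax_sum _)
  have hv2 : v^2 ≤ 2 * KLdiv (softmax θstar) (softmax (θ (N+1))) := by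
    rw [hv]
    exact pinsker (softmax_pos _) (softmax_sum _) (softmax_pos _) (softmax_sum _)
  rw [← hu, ← hv] at hcb
  have hk0 : 0 ≤ KLdiv (softmax θstar) (softmax b) := klnn _ _
  have hκ0 : 0 ≤ KLdiv (softmax b) (softmax θstar) := klnn _ _
  have hKT0 : 0 ≤ KLdiv (softmax θstar) (softmax (θ (N+1))) := klnn _ _
  have hbound : β^2 * KLdiv (softmax θstar) (softmax b)
      ≤ KLdiv (softmax θstar) (softmax (θ (N+1))) := by
    rcases eq_or_lt_of_le hk0 with hk | hk
    · nlinarith [hk]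
    · have huv : 2*β*KLdiv (softmax θstar) (softmax b) ≤ u * v := by
        nlinarith [hsym, hcb, mul_nonneg hβ.le hκ0]
      have hp1 : (2*β*KLdiv (softmax θstar) (softmax b))^2 ≤ (u*v)^2 :=
        pow_le_pow_left₀ (by positivity) huv 2
      have hp2 : (u*v)^2 ≤ (2*KLdiv (softmax θstar) (softmax b))
          * (2*KLdiv (softmax θstar) (softmax (θ (N+1)))) := by
        calc (u*v)^2 = u^2 * v^2 := by ring
          _ ≤ _ := mul_le_mul hu2 hv2 (sq_nonneg v) (by linarith)
      nlinarith [hp1, hp2, hk]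
  -- sup and inf bounds
  have hne : Nonempty (simplex Y) := ⟨⟨softmax θref, softmax_mem_simplex θref⟩⟩
  have hsupb : (⨆ q : simplex Y, Vreg P β (softmax θref) q.1 (softmax (θ (N+1))))
      ≤ 1/2 + β * KLdiv (softmax (θ (N+1))) (softmax b) := by
    apply ciSup_le
    intro q
    have hq := hq2 q.1 q.2.1 q.2.2
    have hVs : Vreg P β (softmax θref) q.1 (softmax (θ (N+1)))
        + Vreg P β (softmax θref) (softmax (θ (N+1))) q.1 = 1 := by
      unfold Vreg
      have h1 := Vval_eq_dot P q.1 (softmax (θ (N+1)))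
      have h2 := Vval_eq_dot P (softmax (θ (N+1))) q.1
      have h3 : egDot q.1 (matVec P (softmax (θ (N+1))))
          + egDot (softmax (θ (N+1))) (matVec P q.1) = 1 :=
        Mswap P hPsum _ _ q.2.2 (softmax_sum _)
      linarith
    have hKL : 0 ≤ KLdiv q.1 (softmax b) :=
      kl_nonneg q.2.1 q.2.2 (softmax_pos b) (softmax_sum b)
    have := mul_nonneg hβ.le hKL
    linarith
  have hinfb : 1/2 - β * KLdiv (softmax (θ (N+1))) (softmax b)
      ≤ ⨅ q : simplex Y, Vreg P β (softmax θref) (softmax (θ (N+1))) q.1 := by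
    apply le_ciInf
    intro q
    have hq := hq2 q.1 q.2.1 q.2.2
    have hKL : 0 ≤ KLdiv q.1 (softmax b) :=
      kl_nonneg q.2.1 q.2.2 (softmax_pos b) (softmax_sum b)
    have := mul_nonneg hβ.le hKL
    linarith
  have hgap : DualGapReg P β (softmax θref) (softmax (θ (N+1)))
      ≤ 2 * β * KLdiv (softmax (θ (N+1))) (softmax b) := by
    unfold DualGapReg
    have := sub_le_sub hsupb hinfb
    linarith
  -- certificate
  have hcert := EGcert η β (KLdiv (softmax θstar) (softmax (θ (N+1))))
    (KLdiv (softmax (θ (N+1))) (softmax θstar))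
    (KLdiv (softmax (θhalf N)) (softmax θstar))
    (KLdiv (softmax (θ (N+1))) (softmax (θhalf N)))
    (KLdiv (softmax (θhalf N)) (softmax (θ N)))
    (KLdiv (softmax θstar) (softmax (θ N)))
    hη hβ hcond (klnn _ _) (klnn _ _) (klnn _ _) (klnn _ _) (klnn _ _) (klnn _ _)
    (key N).1 (key N).2
  -- assemble
  have h2b : 2*β*KLdiv (softmax θstar) (softmax b)
      ≤ 2/β * KLdiv (softmax θstar) (softmax (θ (N+1))) := by
    have hmul := mul_le_mul_of_nonneg_left hbound (by positivity : (0:ℝ) ≤ 2/β)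
    have e : 2/β * (β^2 * KLdiv (softmax θstar) (softmax b))
        = 2*β*KLdiv (softmax θstar) (softmax b) := by
      field_simp
    rw [e] at hmul
    exact hmul
  have hchain : DualGapReg P β (softmax θref) (softmax (θ (N+1)))
      ≤ (2/β + 4/η) * ((1-η*β) * KLdiv (softmax θstar) (softmax (θ N))) := by
    calc DualGapReg P β (softmax θref) (softmax (θ (N+1)))
        ≤ 2*β*KLdiv (softmax (θ (N+1))) (softmax b) := hgap
      _ ≤ 2/β * KLdiv (softmax θstar) (softmax (θ (N+1)))
          + 2*β*KLdiv (softmax (θ (N+1))) (softmax θstar) := by linarith [hΦdec, h2b]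
      _ ≤ (2/β + 4/η) * ((1-η*β) * KLdiv (softmax θstar) (softmax (θ N))) := hcert
  have hmono : (1-η*β) * KLdiv (softmax θstar) (softmax (θ N))
      ≤ (1-η*β) * ((1-η*β)^N * KLdiv (softmax θstar) (softmax (θ 0))) :=
    mul_le_mul_of_nonneg_left (geom N) hρn
  have hc0 : (0:ℝ) ≤ 2/β + 4/η := by positivity
  calc DualGapReg P β (softmax θref) (softmax (θ (N+1)))
      ≤ (2/β + 4/η) * ((1-η*β) * KLdiv (softmax θstar) (softmax (θ N))) := hchain
    _ ≤ (2/β + 4/η) * ((1-η*β) * ((1-η*β)^N * KLdiv (softmax θstar) (softmax (θ 0)))) :=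
        mul_le_mul_of_nonneg_left hmono hc0
    _ = (2 / β + 4 / η) * KLdiv (softmax θstar) (softmax (θ 0)) * (1 - η * β) ^ (N+1) := by
        ring
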